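/- In the construction of A, for any two configurations α₁, α₂ : ℤ → Q̃ with F̃(α₁) = F̃(α₂), for all x ∈ ℤ: (α₁(x),α₁(x+1)) ∈ B_C ↔ (α₂(x),α₂(x+1)) ∈ B_C, and (α₁(x),α₁(x+1)) ∈ B_R ↔ (α₂(x),α₂(x+1)) ∈ B_R. -/
import Mathlib


open scoped Classical

noncomputable section

/-- Heavy-particle part of a state: `p_C(q) = 2·sR·(q / (2·sR))`. -/
def pC (sR q : ℕ) : ℕ := 2 * sR * (q / (2 * sR))

/-- Light-particle part of a state: `p_R(q) = q mod (2·sR)`. -/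
def pR (sR q : ℕ) : ℕ := q % (2 * sR)

/-- All heavy particles `C̃ = {2k·sR : 0 ≤ k ≤ 2sC−1}`. -/
def Ctil (sC sR : ℕ) : Set ℕ := {c | ∃ k < 2 * sC, c = 2 * k * sR}

/-- All light particles `R̃ = {0,…,2sR−1}`. -/
def Rtil (sR : ℕ) : Set ℕ := {r | r < 2 * sR}

/-- `Ĉ = {2k·sR : 0 ≤ k ≤ sC−1}`. -/
def Chat (sC sR : ℕ) : Set ℕ := {c | ∃ k < sC, c = 2 * k * sR}

/-- `Č = {2(k+sC)·sR : 0 ≤ k ≤ sC−1}`. -/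
def Ccheck (sC sR : ℕ) : Set ℕ := {c | ∃ k < sC, c = 2 * (k + sC) * sR}

/-- `R̂ = {0,…,sR−1}`. -/
def Rhat (sR : ℕ) : Set ℕ := {r | r < sR}

/-- `Ř = {sR,…,2sR−1}`. -/
def Rcheck (sR : ℕ) : Set ℕ := {r | sR ≤ r ∧ r < 2 * sR}

/-- Balanced pair of states w.r.t. heavy particles. -/
def BC (sC sR q1 q2 : ℕ) : Prop :=
  pC sR q1 ∈ Chat sC sR ∧ pC sR q2 ∈ Ccheck sC sR ∧
    pC sR q1 + pC sR q2 = 2 * (2 * sC - 1) * sR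

/-- Balanced pair of states w.r.t. light particles. -/
def BR (sR q1 q2 : ℕ) : Prop :=
  pR sR q1 ∈ Rhat sR ∧ pR sR q2 ∈ Rcheck sR ∧
    pR sR q1 + pR sR q2 = 2 * sR - 1

/-- `φ̂_C : C → Ĉ` built from an arbitrary bijection `φC` of `C = Fin sC`. -/
def phatC (sC sR : ℕ) (φC : Fin sC ≃ Fin sC) (c : Fin sC) : ℕ := 2 * (φC c : ℕ) * sR

/-- `φ̂_R : R → R̂` built from an arbitrary bijection `φR` of `R = Fin sR`. -/
def phatR (sR : ℕ) (φR : Fin sR ≃ Fin sR) (r : Fin sR) : ℕ := (φR r : ℕ)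

/-- `φ̌_C(c) = 2(2sC−1)sR − φ̂_C(c)`. -/
def pcheckC (sC sR : ℕ) (φC : Fin sC ≃ Fin sC) (c : Fin sC) : ℕ :=
  2 * (2 * sC - 1) * sR - phatC sC sR φC c

/-- `φ̌_R(r) = 2sR−1 − φ̂_R(r)`. -/
def pcheckR (sR : ℕ) (φR : Fin sR ≃ Fin sR) (r : Fin sR) : ℕ :=
  2 * sR - 1 - phatR sR φR r

/-- `φ̂(c,r) = φ̂_C(c) + φ̂_R(r)`. -/
def phat (sC sR : ℕ) (φC : Fin sC ≃ Fin sC) (φR : Fin sR ≃ Fin sR)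
    (q : Fin sC × Fin sR) : ℕ := phatC sC sR φC q.1 + phatR sR φR q.2

/-- `φ̌(c,r) = φ̌_C(c) + φ̌_R(r)`. -/
def pcheck (sC sR : ℕ) (φC : Fin sC ≃ Fin sC) (φR : Fin sR ≃ Fin sR)
    (q : Fin sC × Fin sR) : ℕ := pcheckC sC sR φC q.1 + pcheckR sR φR q.2

/-- `Q̂ = {ĉ + r̂ : ĉ ∈ Ĉ, r̂ ∈ R̂}`. -/
def Qhat (sC sR : ℕ) : Set ℕ := {q | ∃ c ∈ Chat sC sR, ∃ r ∈ Rhat sR, q = c + r}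

/-- `Q̌ = {č + ř : č ∈ Č, ř ∈ Ř}`. -/
def Qcheck (sC sR : ℕ) : Set ℕ := {q | ∃ c ∈ Ccheck sC sR, ∃ r ∈ Rcheck sR, q = c + r}

/-- `φ̂_C⁻¹` applied to a heavy particle (given as a natural number). -/
def decC (sC sR : ℕ) [NeZero sC] (φC : Fin sC ≃ Fin sC) (c : ℕ) : Fin sC :=
  φC.symm ⟨(c / (2 * sR)) % sC, Nat.mod_lt _ (Nat.pos_of_ne_zero (NeZero.ne sC))⟩

/-- `φ̂_R⁻¹` applied to a light particle (given as a natural number). -/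
def decR (sR : ℕ) [NeZero sR] (φR : Fin sR ≃ Fin sR) (r : ℕ) : Fin sR :=
  φR.symm ⟨r % sR, Nat.mod_lt _ (Nat.pos_of_ne_zero (NeZero.ne sR))⟩

/-- The three-case local function `f̃` of the 4-neighbor RNCCA `A`. -/
def ftil (sC sR : ℕ) [NeZero sC] [NeZero sR] (φC : Fin sC ≃ Fin sC) (φR : Fin sR ≃ Fin sR)
    (f : Fin sC × Fin sR → Fin sC × Fin sR) (qm2 qm1 q0 q1 : ℕ) : ℕ :=
  if BR sR qm1 q0 ∧ BC sC sR q0 q1 then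
    phat sC sR φC φR (f (decC sC sR φC (pC sR q0), decR sR φR (pR sR qm1)))
  else if BR sR qm2 qm1 ∧ BC sC sR qm1 q0 then
    pcheck sC sR φC φR (f (decC sC sR φC (pC sR qm1), decR sR φR (pR sR qm2)))
  else pC sR q0 + pR sR qm1

/-- Global function `F̃` of `A` with neighborhood `(−2,−1,0,1)`. -/
def Ftil (sC sR : ℕ) [NeZero sC] [NeZero sR] (φC : Fin sC ≃ Fin sC) (φR : Fin sR ≃ Fin sR)
    (f : Fin sC × Fin sR → Fin sC × Fin sR) (α : ℤ → ℕ) (x : ℤ) : ℕ :=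
  ftil sC sR φC φR f (α (x - 2)) (α (x - 1)) (α x) (α (x + 1))

/-- The encoding `τ̃`: `τ̃(α)(2x) = φ̂(α(x))`, `τ̃(α)(2x+1) = φ̌(α(x))`. -/
def tenc (sC sR : ℕ) (φC : Fin sC ≃ Fin sC) (φR : Fin sR ≃ Fin sR)
    (α : ℤ → Fin sC × Fin sR) (y : ℤ) : ℕ :=
  if Even y then phat sC sR φC φR (α (y / 2)) else pcheck sC sR φC φR (α ((y - 1) / 2))

/-- Global function of the 2-neighbor PCA `P` with neighborhood `(0,−1)`. -/
def FP {C R : Type*} (f : C × R → C × R) (α : ℤ → C × R) (x : ℤ) : C × R :=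
  f ((α x).1, (α (x - 1)).2)

end

section Aux

variable (sC sR : ℕ) [NeZero sC] [NeZero sR] (φC : Fin sC ≃ Fin sC) (φR : Fin sR ≃ Fin sR)
  (f : Fin sC × Fin sR → Fin sC × Fin sR)

private lemma sR_pos : 0 < sR := Nat.pos_of_ne_zero (NeZero.ne sR)
private lemma sC_pos : 0 < sC := Nat.pos_of_ne_zero (NeZero.ne sC)

private lemma pC_decomp (k r : ℕ) (hr : r < 2 * sR) : pC sR (2 * sR * k + r) = 2 * sR * k := by
  unfold pC
  rw [Nat.mul_add_div (by have := sR_pos sR; omega), Nat.div_eq_of_lt hr]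
  ring

private lemma pR_decomp (k r : ℕ) (hr : r < 2 * sR) : pR sR (2 * sR * k + r) = r := by
  unfold pR
  rw [Nat.mul_add_mod, Nat.mod_eq_of_lt hr]

private lemma phat_eq (u : Fin sC × Fin sR) :
    phat sC sR φC φR u = 2 * sR * (φC u.1 : ℕ) + (φR u.2 : ℕ) := by
  unfold phat phatC phatR; ring

private lemma pcheck_eq (u : Fin sC × Fin sR) :
    pcheck sC sR φC φR u = 2 * sR * (2 * sC - 1 - (φC u.1 : ℕ)) + (2 * sR - 1 - (φR u.2 : ℕ)) := by
  unfold pcheck pcheckC pcheckR phatC phatR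
  have hj : (φC u.1 : ℕ) < sC := (φC u.1).2
  have h2 : 2 * sR * (2 * sC - 1 - (φC u.1 : ℕ)) = 2 * sR * (2 * sC - 1) - 2 * sR * (φC u.1 : ℕ) :=
    Nat.mul_sub _ _ _
  have h : 2 * (2 * sC - 1) * sR - 2 * (φC u.1 : ℕ) * sR = 2 * sR * (2 * sC - 1 - (φC u.1 : ℕ)) := by
    rw [h2]
    congr 1 <;> ring
  rw [h]

private lemma pC_phat (u : Fin sC × Fin sR) :
    pC sR (phat sC sR φC φR u) = 2 * sR * (φC u.1 : ℕ) := by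
  rw [phat_eq, pC_decomp]
  have := (φR u.2).2; omega

private lemma pR_phat (u : Fin sC × Fin sR) :
    pR sR (phat sC sR φC φR u) = (φR u.2 : ℕ) := by
  rw [phat_eq, pR_decomp]
  have := (φR u.2).2; omega

private lemma pC_pcheck (u : Fin sC × Fin sR) :
    pC sR (pcheck sC sR φC φR u) = 2 * sR * (2 * sC - 1 - (φC u.1 : ℕ)) := by
  rw [pcheck_eq, pC_decomp]
  have := sR_pos sR; omega

private lemma pR_pcheck (u : Fin sC × Fin sR) :
    pR sR (pcheck sC sR φC φR u) = 2 * sR - 1 - (φR u.2 : ℕ) := by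
  rw [pcheck_eq, pR_decomp]
  have := sR_pos sR; omega

private lemma pC_phat_mem (u : Fin sC × Fin sR) :
    pC sR (phat sC sR φC φR u) ∈ Chat sC sR := by
  rw [pC_phat]
  exact ⟨(φC u.1 : ℕ), (φC u.1).2, by ring⟩

private lemma pC_pcheck_mem (u : Fin sC × Fin sR) :
    pC sR (pcheck sC sR φC φR u) ∈ Ccheck sC sR := by
  rw [pC_pcheck]
  have hj : (φC u.1 : ℕ) < sC := (φC u.1).2
  have hc := sC_pos sC
  refine ⟨sC - 1 - (φC u.1 : ℕ), by omega, ?_⟩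
  have h : sC - 1 - (φC u.1 : ℕ) + sC = 2 * sC - 1 - (φC u.1 : ℕ) := by omega
  rw [← h]; ring

private lemma chat_ccheck_disj {q : ℕ} (h1 : q ∈ Chat sC sR) (h2 : q ∈ Ccheck sC sR) : False := by
  obtain ⟨k, hk, rfl⟩ := h1
  obtain ⟨k', hk', he⟩ := h2
  have : 2 * k = 2 * (k' + sC) :=
    Nat.eq_of_mul_eq_mul_right (sR_pos sR) he
  omega

private lemma BC_phat_pcheck (u : Fin sC × Fin sR) :
    BC sC sR (phat sC sR φC φR u) (pcheck sC sR φC φR u) := by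
  refine ⟨pC_phat_mem sC sR φC φR u, pC_pcheck_mem sC sR φC φR u, ?_⟩
  rw [pC_phat, pC_pcheck, ← Nat.mul_add]
  have hj : (φC u.1 : ℕ) < sC := (φC u.1).2
  have h : (φC u.1 : ℕ) + (2 * sC - 1 - (φC u.1 : ℕ)) = 2 * sC - 1 := by omega
  rw [h]; ring

private lemma BR_phat_pcheck (u : Fin sC × Fin sR) :
    BR sR (phat sC sR φC φR u) (pcheck sC sR φC φR u) := by
  have hm : (φR u.2 : ℕ) < sR := (φR u.2).2
  refine ⟨?_, ?_, ?_⟩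
  · rw [pR_phat]; exact hm
  · rw [pR_pcheck]; constructor <;> omega
  · rw [pR_phat, pR_pcheck]; omega

private lemma pC_case3 (q q' : ℕ) : pC sR (pC sR q + pR sR q') = pC sR q := by
  have h : pR sR q' < 2 * sR := Nat.mod_lt _ (by have := sR_pos sR; omega)
  exact pC_decomp sR _ _ h

private lemma pR_case3 (q q' : ℕ) : pR sR (pC sR q + pR sR q') = pR sR q' := by
  have h : pR sR q' < 2 * sR := Nat.mod_lt _ (by have := sR_pos sR; omega)
  exact pR_decomp sR _ _ h

private lemma keyBC (a b c d e : ℕ) :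
    BC sC sR (ftil sC sR φC φR f a b c d) (ftil sC sR φC φR f b c d e) ↔ BC sC sR c d := by
  unfold ftil
  by_cases h1 : BR sR b c ∧ BC sC sR c d
  · rw [if_pos h1]
    have h1' : ¬(BR sR c d ∧ BC sC sR d e) := by
      rintro ⟨_, hde⟩
      exact chat_ccheck_disj sC sR hde.1 h1.2.2.1
    rw [if_neg h1', if_pos h1]
    exact ⟨fun _ => h1.2, fun _ => BC_phat_pcheck sC sR φC φR _⟩
  · rw [if_neg h1]
    by_cases h1' : BR sR c d ∧ BC sC sR d e
    · rw [if_pos h1']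
      constructor
      · rintro ⟨_, hmem, _⟩
        exact absurd hmem (fun h => chat_ccheck_disj sC sR (pC_phat_mem sC sR φC φR _) h)
      · intro hcd
        exact absurd h1'.2.1 (fun h => chat_ccheck_disj sC sR h hcd.2.1)
    · rw [if_neg h1', if_neg h1]
      by_cases h2 : BR sR a b ∧ BC sC sR b c
      · rw [if_pos h2]
        constructor
        · rintro ⟨hmem, _, _⟩
          exact absurd hmem (fun h => chat_ccheck_disj sC sR h (pC_pcheck_mem sC sR φC φR _))
        · intro hcd
          exact absurd hcd.1 (fun h => chat_ccheck_disj sC sR h h2.2.2.1)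
      · rw [if_neg h2]
        unfold BC
        rw [pC_case3, pC_case3]

private lemma keyBR (b c d e g : ℕ) :
    BR sR (ftil sC sR φC φR f b c d e) (ftil sC sR φC φR f c d e g) ↔ BR sR c d := by
  unfold ftil
  by_cases h1 : BR sR c d ∧ BC sC sR d e
  · rw [if_pos h1]
    have h1' : ¬(BR sR d e ∧ BC sC sR e g) := by
      rintro ⟨hde, _⟩
      have h1a := h1.1.2.1
      have h2a := hde.1
      simp only [Rhat, Rcheck, Set.mem_setOf_eq] at h1a h2a
      omega
    rw [if_neg h1', if_pos h1]
    exact ⟨fun _ => h1.1, fun _ => BR_phat_pcheck sC sR φC φR _⟩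
  · rw [if_neg h1]
    by_cases h2 : BR sR b c ∧ BC sC sR c d
    · rw [if_pos h2]
      constructor
      · rintro ⟨hmem, _, _⟩
        have h3 := pR_pcheck sC sR φC φR (f (decC sC sR φC (pC sR c), decR sR φR (pR sR b)))
        simp only [Rhat, Set.mem_setOf_eq] at hmem
        have := sR_pos sR
        have hm := (φR (f (decC sC sR φC (pC sR c), decR sR φR (pR sR b))).2).2
        omega
      · intro hcd
        have h3 := h2.1.2.1
        have h4 := hcd.1
        simp only [Rhat, Rcheck, Set.mem_setOf_eq] at h3 h4
        omega
    · rw [if_neg h2]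
      by_cases h1' : BR sR d e ∧ BC sC sR e g
      · rw [if_pos h1']
        constructor
        · rintro ⟨_, hmem, _⟩
          have h3 := pR_phat sC sR φC φR (f (decC sC sR φC (pC sR e), decR sR φR (pR sR d)))
          simp only [Rcheck, Set.mem_setOf_eq] at hmem
          have hm := (φR (f (decC sC sR φC (pC sR e), decR sR φR (pR sR d))).2).2
          omega
        · intro hcd
          have h3 := h1'.1.1
          have h4 := hcd.2.1
          simp only [Rhat, Rcheck, Set.mem_setOf_eq] at h3 h4
          omega
      · rw [if_neg h1', if_neg h1]
        unfold BR
        rw [pR_case3, pR_case3]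

private lemma FtilBC (α : ℤ → ℕ) (x : ℤ) :
    BC sC sR (Ftil sC sR φC φR f α x) (Ftil sC sR φC φR f α (x + 1)) ↔
      BC sC sR (α x) (α (x + 1)) := by
  unfold Ftil
  rw [show x + 1 - 2 = x - 1 by ring, show x + 1 - 1 = x by ring]
  exact keyBC sC sR φC φR f _ _ _ _ _

private lemma FtilBR (α : ℤ → ℕ) (x : ℤ) :
    BR sR (Ftil sC sR φC φR f α (x + 1)) (Ftil sC sR φC φR f α (x + 2)) ↔
      BR sR (α x) (α (x + 1)) := by
  unfold Ftil
  rw [show x + 1 - 2 = x - 1 by ring, show x + 1 - 1 = x by ring,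
    show x + 2 - 2 = x by ring, show x + 2 - 1 = x + 1 by ring, show x + 1 + 1 = x + 2 by ring]
  exact keyBR sC sR φC φR f _ _ _ _ _

end Aux

theorem stmt18 (sC sR : ℕ) [NeZero sC] [NeZero sR] (φC : Fin sC ≃ Fin sC)
    (φR : Fin sR ≃ Fin sR) (f : Fin sC × Fin sR → Fin sC × Fin sR)
    (hf : Function.Injective f) (α1 α2 : ℤ → ℕ)
    (hα1 : ∀ x : ℤ, α1 x < 4 * sC * sR) (hα2 : ∀ x : ℤ, α2 x < 4 * sC * sR)
    (hF : Ftil sC sR φC φR f α1 = Ftil sC sR φC φR f α2) :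
    ∀ x : ℤ, (BC sC sR (α1 x) (α1 (x + 1)) ↔ BC sC sR (α2 x) (α2 (x + 1))) ∧
      (BR sR (α1 x) (α1 (x + 1)) ↔ BR sR (α2 x) (α2 (x + 1))) := by
  intro x
  constructor
  · rw [← FtilBC sC sR φC φR f α1 x, ← FtilBC sC sR φC φR f α2 x, hF]
  · rw [← FtilBR sC sR φC φR f α1 x, ← FtilBR sC sR φC φR f α2 x, hF]
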